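/- Let h > 0, g ∈ ℝ, let a₁ ≠ a₂ be real numbers, and let c₁, c₂ ∈ ℂ with c₁ + c₂ ≠ 0. Define ψ_h(x) := (π h²)^(-1/4) * Real.exp(-x²/(2h²)) and Ψ(x) := c₁ • ψ_h(x - g*a₁) + c₂ • ψ_h(x - g*a₂). Set Λm := (a₁+a₂)/2, Λr := (a₂-a₁)/2, A_w := (a₁•c₁ + a₂•c₂)/(c₁+c₂), A⁰ := A_w - Λm, amp := (‖A⁰‖²/Λr² - 1)/2, and E := Real.exp(-g²Λr²/h²). Assume ∫ ‖Ψ(x)‖² dx ≠ 0 (equivalently 1 + amp*(1 - E) ≠ 0). Then the conditional expectation of position is (∫ x * ‖Ψ(x)‖² dx) / (∫ ‖Ψ(x)‖² dx) = g * (A⁰.re) / (1 + amp*(1 - E)) + g*Λm. -/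

import Mathlib

open MeasureTheory

/-- The normalised Gaussian wave function of width `h`:
`psih h x = (π h²)^(-1/4) * exp (-x²/(2h²))`. -/
noncomputable def psih (h x : ℝ) : ℝ :=
  (Real.pi * h ^ 2) ^ (-(1 / 4) : ℝ) * Real.exp (-x ^ 2 / (2 * h ^ 2))

lemma gauss_int (h : ℝ) (hh : 0 < h) (m : ℝ) :
    ∫ x : ℝ, Real.exp (-(1/h^2) * (x - m)^2) = Real.sqrt (Real.pi * h^2) := by
  rw [integral_sub_right_eq_self (fun y : ℝ => Real.exp (-(1/h^2) * y^2)) m, integral_gaussian]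
  congr 1
  field_simp

lemma gauss_int_x (h : ℝ) (hh : 0 < h) (m : ℝ) :
    ∫ x : ℝ, x * Real.exp (-(1/h^2) * (x - m)^2) = m * Real.sqrt (Real.pi * h^2) := by
  have hb : 0 < 1/h^2 := by positivity
  have h0 : (∫ y : ℝ, y * Real.exp (-(1/h^2) * y^2)) = 0 := by
    have hodd := integral_neg_eq_self (μ := volume)
      (fun y : ℝ => y * Real.exp (-(1/h^2) * y^2))
    have hfun : ∀ x : ℝ, (-x) * Real.exp (-(1/h^2) * (-x)^2)
        = -(x * Real.exp (-(1/h^2) * x^2)) := fun x => by ring_nf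
    simp only [hfun, integral_neg] at hodd
    linarith [hodd]
  have key := integral_sub_right_eq_self (μ := volume)
    (fun y : ℝ => (y + m) * Real.exp (-(1/h^2) * y^2)) m
  simp only [sub_add_cancel] at key
  rw [key]
  simp_rw [add_mul]
  rw [integral_add (integrable_mul_exp_neg_mul_sq hb)
    ((integrable_exp_neg_mul_sq hb).const_mul m), h0, integral_const_mul, integral_gaussian]
  rw [show Real.pi / (1/h^2) = Real.pi * h^2 by field_simp]
  ring

lemma psih_mul (h : ℝ) (hh : 0 < h) (b₁ b₂ x : ℝ) :
    psih h (x - b₁) * psih h (x - b₂)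
      = Real.exp (-(b₁ - b₂)^2 / (4*h^2)) *
        ((Real.pi * h^2) ^ (-(1/2) : ℝ) * Real.exp (-(1/h^2) * (x - (b₁+b₂)/2)^2)) := by
  unfold psih
  have hπ : 0 < Real.pi * h^2 := by positivity
  have h1 : (Real.pi*h^2)^(-(1/4):ℝ) * (Real.pi*h^2)^(-(1/4):ℝ)
      = (Real.pi*h^2)^(-(1/2):ℝ) := by
    rw [← Real.rpow_add hπ]; norm_num
  have h2 : Real.exp (-(x-b₁)^2/(2*h^2)) * Real.exp (-(x-b₂)^2/(2*h^2))
      = Real.exp (-(b₁-b₂)^2/(4*h^2)) * Real.exp (-(1/h^2)*(x-(b₁+b₂)/2)^2) := by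
    rw [← Real.exp_add, ← Real.exp_add]
    congr 1
    field_simp
    ring
  calc ((Real.pi*h^2)^(-(1/4):ℝ) * Real.exp (-(x-b₁)^2/(2*h^2)))
        * ((Real.pi*h^2)^(-(1/4):ℝ) * Real.exp (-(x-b₂)^2/(2*h^2)))
      = ((Real.pi*h^2)^(-(1/4):ℝ) * (Real.pi*h^2)^(-(1/4):ℝ))
        * (Real.exp (-(x-b₁)^2/(2*h^2)) * Real.exp (-(x-b₂)^2/(2*h^2))) := by ring
    _ = _ := by rw [h1, h2]; ring

lemma psih_sq (h : ℝ) (hh : 0 < h) (b x : ℝ) :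
    psih h (x - b) * psih h (x - b)
      = (Real.pi * h^2) ^ (-(1/2) : ℝ) * Real.exp (-(1/h^2) * (x - b)^2) := by
  have := psih_mul h hh b b x
  simpa [add_self_div_two] using this

lemma norm_comb (c₁ c₂ : ℂ) (r₁ r₂ : ℝ) :
    ‖c₁ * (r₁ : ℂ) + c₂ * (r₂ : ℂ)‖^2
      = ‖c₁‖^2 * (r₁ * r₁) + ‖c₂‖^2 * (r₂ * r₂)
        + (2 * (c₁ * (starRingEnd ℂ c₂)).re) * (r₁ * r₂) := by
  simp only [← Complex.normSq_eq_norm_sq, Complex.sq_norm,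
    Complex.normSq_apply, Complex.add_re, Complex.add_im, Complex.mul_re, Complex.mul_im,
    Complex.ofReal_re, Complex.ofReal_im, Complex.conj_re, Complex.conj_im]
  ring


set_option maxHeartbeats 1000000 in
/-- Exact full-order formula for the conditional expectation of the meter position
in the post-selected measurement of a dichotomic observable with Gaussian meter:
`(∫ x ‖Ψ‖²)/(∫ ‖Ψ‖²) = g Re(A⁰)/(1 + amp (1 - E)) + g Λm`. -/
theorem stmt_17 (h g a₁ a₂ : ℝ) (hh : 0 < h) (ha : a₁ ≠ a₂)
    (c₁ c₂ : ℂ) (hc : c₁ + c₂ ≠ 0)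
    (Ψ : ℝ → ℂ)
    (hΨ : Ψ = fun x => c₁ * ((psih h (x - g * a₁) : ℝ) : ℂ)
        + c₂ * ((psih h (x - g * a₂) : ℝ) : ℂ))
    (Λm Λr : ℝ) (hΛm : Λm = (a₁ + a₂) / 2) (hΛr : Λr = (a₂ - a₁) / 2)
    (Aw A0 : ℂ) (hAw : Aw = (a₁ • c₁ + a₂ • c₂) / (c₁ + c₂)) (hA0 : A0 = Aw - (Λm : ℂ))
    (amp E : ℝ) (hamp : amp = (‖A0‖ ^ 2 / Λr ^ 2 - 1) / 2)
    (hE : E = Real.exp (-(g ^ 2 * Λr ^ 2) / h ^ 2))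
    (hnorm : (∫ x, ‖Ψ x‖ ^ 2) ≠ 0) :
    (∫ x, x * ‖Ψ x‖ ^ 2) / (∫ x, ‖Ψ x‖ ^ 2)
      = g * A0.re / (1 + amp * (1 - E)) + g * Λm := by
  have hb : 0 < 1/h^2 := by positivity
  set b₁ := g * a₁ with hb₁
  set b₂ := g * a₂ with hb₂
  set m : ℝ := (b₁ + b₂)/2 with hm
  set P : ℝ := (Real.pi * h^2) ^ (-(1/2) : ℝ) with hP
  set S : ℝ := Real.sqrt (Real.pi * h^2) with hS
  set K : ℝ := 2 * (c₁ * (starRingEnd ℂ c₂)).re with hK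
  have hπ : 0 < Real.pi * h^2 := by positivity
  have hPS : P * S = 1 := by
    rw [hP, hS, Real.sqrt_eq_rpow, ← Real.rpow_add hπ]
    norm_num
  have hE' : Real.exp (-(b₁ - b₂)^2 / (4*h^2)) = E := by
    rw [hE, hΛr, hb₁, hb₂]
    congr 1
    field_simp
    ring
  -- pointwise expansion
  have hpt : ∀ x : ℝ, ‖Ψ x‖^2
      = (‖c₁‖^2 * P) * Real.exp (-(1/h^2) * (x - b₁)^2)
        + (‖c₂‖^2 * P) * Real.exp (-(1/h^2) * (x - b₂)^2)
        + (K * E * P) * Real.exp (-(1/h^2) * (x - m)^2) := by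
    intro x
    rw [hΨ]
    simp only
    rw [norm_comb, psih_sq h hh b₁ x, psih_sq h hh b₂ x, psih_mul h hh b₁ b₂ x, hE']
    ring
  have hptx : ∀ x : ℝ, x * ‖Ψ x‖^2
      = (‖c₁‖^2 * P) * (x * Real.exp (-(1/h^2) * (x - b₁)^2))
        + (‖c₂‖^2 * P) * (x * Real.exp (-(1/h^2) * (x - b₂)^2))
        + (K * E * P) * (x * Real.exp (-(1/h^2) * (x - m)^2)) := by
    intro x; rw [hpt x]; ring
  have Ig : ∀ m' : ℝ, Integrable (fun x : ℝ => Real.exp (-(1/h^2) * (x - m')^2)) := by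
    intro m'
    exact (integrable_exp_neg_mul_sq hb).comp_sub_right m'
  have Igx : ∀ m' : ℝ, Integrable (fun x : ℝ => x * Real.exp (-(1/h^2) * (x - m')^2)) := by
    intro m'
    have : Integrable (fun y : ℝ => (y + m') * Real.exp (-(1/h^2) * y^2)) := by
      simp_rw [add_mul]
      exact (integrable_mul_exp_neg_mul_sq hb).add
        ((integrable_exp_neg_mul_sq hb).const_mul m')
    have h2 := this.comp_sub_right m'
    simpa [sub_add_cancel] using h2
  have hDen : (∫ x, ‖Ψ x‖^2) = ‖c₁‖^2 + ‖c₂‖^2 + K * E := by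
    simp only [hpt]
    have I1 : Integrable (fun x : ℝ => ‖c₁‖^2 * P * Real.exp (-(1/h^2) * (x - b₁)^2)
        + ‖c₂‖^2 * P * Real.exp (-(1/h^2) * (x - b₂)^2)) :=
      ((Ig b₁).const_mul _).add ((Ig b₂).const_mul _)
    rw [integral_add I1 ((Ig m).const_mul _),
      integral_add ((Ig b₁).const_mul _) ((Ig b₂).const_mul _)]
    simp only [integral_const_mul]
    rw [gauss_int h hh b₁, gauss_int h hh b₂, gauss_int h hh m]
    linear_combination (‖c₁‖^2 + ‖c₂‖^2 + K*E) * hPS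
  have hNum : (∫ x, x * ‖Ψ x‖^2) = g*a₁*‖c₁‖^2 + g*a₂*‖c₂‖^2 + K * (g*Λm) * E := by
    simp only [hptx]
    have I1 : Integrable (fun x : ℝ => ‖c₁‖^2 * P * (x * Real.exp (-(1/h^2) * (x - b₁)^2))
        + ‖c₂‖^2 * P * (x * Real.exp (-(1/h^2) * (x - b₂)^2))) :=
      ((Igx b₁).const_mul _).add ((Igx b₂).const_mul _)
    rw [integral_add I1 ((Igx m).const_mul _),
      integral_add ((Igx b₁).const_mul _) ((Igx b₂).const_mul _)]
    simp only [integral_const_mul]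
    rw [gauss_int_x h hh b₁, gauss_int_x h hh b₂, gauss_int_x h hh m]
    rw [hm, hb₁, hb₂, hΛm]
    linear_combination (g*a₁*‖c₁‖^2 + g*a₂*‖c₂‖^2 + K*(g*(a₁+a₂)/2)*E) * hPS
  -- Algebraic part
  have hΛr0 : Λr ≠ 0 := by
    rw [hΛr]
    intro H
    apply ha
    linarith
  have hA0c : A0 * (c₁ + c₂) = (Λr : ℂ) * (c₂ - c₁) := by
    rw [hA0, hAw, hΛm, hΛr]
    simp only [Complex.real_smul]
    field_simp
    push_cast
    ring
  obtain ⟨p₁, q₁⟩ := c₁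
  obtain ⟨p₂, q₂⟩ := c₂
  set X := A0.re with hX
  set Y := A0.im with hY
  have hre := congrArg Complex.re hA0c
  have him := congrArg Complex.im hA0c
  simp only [Complex.mul_re, Complex.mul_im, Complex.add_re, Complex.add_im,
    Complex.sub_re, Complex.sub_im, Complex.ofReal_re, Complex.ofReal_im] at hre him
  have hD : (p₁+p₂)^2 + (q₁+q₂)^2 ≠ 0 := by
    intro H
    apply hc
    have h1 : p₁ + p₂ = 0 := by nlinarith [sq_nonneg (p₁+p₂), sq_nonneg (q₁+q₂)]
    have h2 : q₁ + q₂ = 0 := by nlinarith [sq_nonneg (p₁+p₂), sq_nonneg (q₁+q₂)]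
    apply Complex.ext <;> simp [h1, h2]
  have hc1 : (‖(⟨p₁, q₁⟩ : ℂ)‖ : ℝ)^2 = p₁^2 + q₁^2 := by
    rw [Complex.sq_norm, Complex.normSq_apply]; ring
  have hc2 : (‖(⟨p₂, q₂⟩ : ℂ)‖ : ℝ)^2 = p₂^2 + q₂^2 := by
    rw [Complex.sq_norm, Complex.normSq_apply]; ring
  have hKc : K = 2 * (p₁*p₂ + q₁*q₂) := by
    rw [hK]
    simp only [Complex.mul_re, Complex.conj_re, Complex.conj_im]
    ring
  have hnormsq : ‖A0‖^2 = X^2 + Y^2 := by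
    rw [Complex.sq_norm, Complex.normSq_apply, hX, hY]; ring
  have hXeq : X = Λr * (p₂^2 + q₂^2 - p₁^2 - q₁^2) / ((p₁+p₂)^2 + (q₁+q₂)^2) := by
    rw [eq_div_iff hD]
    linear_combination (p₁+p₂) * hre + (q₁+q₂) * him
  have hXY : X^2 + Y^2
      = Λr^2 * ((p₂-p₁)^2 + (q₂-q₁)^2) / ((p₁+p₂)^2 + (q₁+q₂)^2) := by
    rw [eq_div_iff hD]
    linear_combination (X*(p₁+p₂) - Y*(q₁+q₂) + Λr*(p₂-p₁)) * hre
      + (X*(q₁+q₂) + Y*(p₁+p₂) + Λr*(q₂-q₁)) * him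
  rw [hc1, hc2, hKc] at hDen hNum
  rw [hDen] at hnorm
  have h1E : 1 + amp * (1 - E)
      = (p₁^2+q₁^2 + (p₂^2+q₂^2) + 2*(p₁*p₂+q₁*q₂) * E) / ((p₁+p₂)^2 + (q₁+q₂)^2) := by
    rw [hamp, hnormsq, hXY]
    field_simp
    ring
  have h10 : 1 + amp * (1 - E) ≠ 0 := by
    rw [h1E]
    exact div_ne_zero hnorm hD
  rw [hNum, hDen, h1E, hXeq, hΛm, hΛr]
  field_simp
  ring
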